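/- The vector (1/(4τ), 1/2, 1/(2τ), 1/(4τ⁴)), with τ = (1+√5)/2, is a right eigenvector of M̂ᵀ with eigenvalue τ³, where M̂ = [[2,3,3,1],[0,2,1,0],[1,2,1,0],[1,1,1,0]], and its entries sum to 1. -/

import Mathlib

theorem modified_left_PF_eigenvector
    (τ : ℝ) (hτ : τ = (1 + Real.sqrt 5) / 2)
    (M' : Matrix (Fin 4) (Fin 4) ℝ)
    (hM' : M' = !![2,3,3,1; 0,2,1,0; 1,2,1,0; 1,1,1,0])
    (w : Fin 4 → ℝ)
    (hw : w = ![1 / (4 * τ), 1 / 2, 1 / (2 * τ), 1 / (4 * τ ^ 4)]) :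
    M'.transpose.mulVec w = τ ^ 3 • w ∧ w 0 + w 1 + w 2 + w 3 = 1 := by
  have hs : Real.sqrt 5 ^ 2 = 5 := Real.sq_sqrt (by norm_num)
  have hsq : τ ^ 2 = τ + 1 := by rw [hτ]; nlinarith [hs]
  have hpos : τ > 0 := by
    rw [hτ]; have := Real.sqrt_nonneg 5; linarith
  have hne : τ ≠ 0 := ne_of_gt hpos
  subst hM' hw
  refine ⟨funext fun i => ?_, ?_⟩
  · fin_cases i <;>
      simp [Matrix.mulVec, dotProduct, Fin.sum_univ_succ] <;>
      field_simp
    · linear_combination (-2+2*τ-4*τ^2-2*τ^3-2*τ^4) * hsq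
    · linear_combination (-2+2*τ-4*τ^2-8*τ^3-4*τ^4-4*τ^5) * hsq
    · linear_combination (-2+2*τ-4*τ^2-4*τ^3-4*τ^4) * hsq
  · simp
    field_simp
    linear_combination (-2+2*τ-4*τ^2) * hsq
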